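/- With B_n = Π_{1≤j<k≤n} (v_j² + v_k²) where v_k = 2·cos(2kπ/(2n+1)), every B_n is odd. -/

import Mathlib

open Real Finset

lemma aux_geom (x : ℂ) (N : ℕ) :
    (1 + x) * ∑ i ∈ range N, x ^ (2 * i) = ∑ r ∈ range (2 * N), x ^ r := by
  induction N with
  | zero => simp
  | succ k ih =>
    rw [sum_range_succ, mul_add, ih, show 2 * (k + 1) = 2 * k + 1 + 1 by ring,
      sum_range_succ, sum_range_succ]
    ring

lemma aux_prod_inv {α : Type*} (S : Subalgebra ℤ ℂ) (Q : Finset α) (f : α → ℂ)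
    (h : ∀ p ∈ Q, ∃ c ∈ S, f p * c = 1) :
    ∃ C ∈ S, (∏ p ∈ Q, f p) * C = 1 := by
  induction Q using Finset.cons_induction with
  | empty => exact ⟨1, one_mem S, by simp⟩
  | cons x Q hx ih =>
    obtain ⟨C, hCS, hC⟩ := ih (fun p hp => h p (mem_cons_of_mem hp))
    obtain ⟨c, hcS, hc⟩ := h x (mem_cons_self x Q)
    refine ⟨c * C, mul_mem hcS hCS, ?_⟩
    rw [prod_cons]
    linear_combination ((∏ p ∈ Q, f p) * C) * hc + hC

lemma aux_sq {α : Type*} (S : Subalgebra ℤ ℂ) (Q : Finset α) (f g : α → ℂ)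
    (hf : ∀ p ∈ Q, f p ∈ S) (hg : ∀ p ∈ Q, g p ∈ S) :
    ∃ E ∈ S, ∏ p ∈ Q, (f p ^ 2 + g p ^ 2) = (∏ p ∈ Q, (f p + g p)) ^ 2 + 2 * E := by
  induction Q using Finset.cons_induction with
  | empty => exact ⟨0, zero_mem S, by simp⟩
  | cons x Q hx ih =>
    obtain ⟨E, hES, hE⟩ := ih (fun p hp => hf p (mem_cons_of_mem hp))
      (fun p hp => hg p (mem_cons_of_mem hp))
    have hfx := hf x (mem_cons_self x Q)
    have hgx := hg x (mem_cons_self x Q)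
    have hPQ : (∏ p ∈ Q, (f p + g p)) ∈ S :=
      prod_mem (fun p hp => add_mem (hf p (mem_cons_of_mem hp)) (hg p (mem_cons_of_mem hp)))
    refine ⟨(f x + g x) ^ 2 * E - f x * g x * (∏ p ∈ Q, (f p + g p)) ^ 2
      - (f x * g x * E + f x * g x * E), ?_, ?_⟩
    · exact sub_mem (sub_mem (mul_mem (pow_mem (add_mem hfx hgx) 2) hES)
        (mul_mem (mul_mem hfx hgx) (pow_mem hPQ 2)))
        (add_mem (mul_mem (mul_mem hfx hgx) hES) (mul_mem (mul_mem hfx hgx) hES))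
    · rw [prod_cons, prod_cons]
      linear_combination (f x ^ 2 + g x ^ 2) * hE

theorem stmt_11 (n : ℕ) (hn : 0 < n) (v : ℕ → ℝ)
    (hv : ∀ k, v k = 2 * Real.cos (2 * k * π / (2 * n + 1)))
    (B : ℤ)
    (hB : (B : ℝ) =
      ∏ p ∈ Finset.filter (fun p : ℕ × ℕ => p.1 < p.2)
        (Finset.Icc 1 n ×ˢ Finset.Icc 1 n), (v p.1 ^ 2 + v p.2 ^ 2)) :
    Odd B := by
  rcases Int.even_or_odd B with he | ho
  · exfalso
    obtain ⟨b, hb⟩ := he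
    set m : ℕ := 2 * n + 1 with hmdef
    have hprim : IsPrimitiveRoot (Complex.exp (2 * Real.pi * Complex.I / m)) m :=
      Complex.isPrimitiveRoot_exp m (by omega)
    set ζ : ℂ := Complex.exp (2 * Real.pi * Complex.I / m) with hζdef
    have hζm : ζ ^ m = 1 := hprim.pow_eq_one
    set S := integralClosure ℤ ℂ with hSdef
    have hζS : ζ ∈ S := by
      refine ⟨Polynomial.X ^ m - 1, ?_, ?_⟩
      · simpa using Polynomial.monic_X_pow_sub_C (1 : ℤ) (by omega)
      · simp [hζm]
    -- power reduction helper
    have hpow : ∀ a c : ℕ, ζ ^ (a + c * m) = ζ ^ a := by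
      intro a c
      rw [pow_add, mul_comm c m, pow_mul, hζm, one_pow, mul_one]
    -- complex form of v
    have hζk : ∀ k : ℕ, ζ ^ k = Complex.exp (((2 * k * π / m : ℝ) : ℂ) * Complex.I) := by
      intro k
      rw [hζdef, ← Complex.exp_nat_mul]
      congr 1
      push_cast
      ring
    have hζik : ∀ k : ℕ, ζ ^ (k * (m - 1)) = (ζ ^ k)⁻¹ := by
      intro k
      have hmul : ζ ^ k * ζ ^ (k * (m - 1)) = 1 := by
        rw [← pow_add]
        have h1 : k * (m - 1) + k = k * m := by
          conv_rhs => rw [show m = (m - 1) + 1 by omega]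
          rw [Nat.mul_succ]
        rw [show k + k * (m - 1) = 0 + k * m by omega, hpow 0 k, pow_zero]
      exact (inv_eq_of_mul_eq_one_right hmul).symm
    have hvC : ∀ k : ℕ, ((v k : ℝ) : ℂ) = ζ ^ k + ζ ^ (k * (m - 1)) := by
      intro k
      rw [hv k, hζik k, hζk k]
      rw [← Complex.exp_neg, ← neg_mul, ← Complex.ofReal_neg]
      push_cast
      simp only [hmdef]; push_cast
      exact Complex.two_cos _
    have hvS : ∀ k : ℕ, ((v k : ℝ) : ℂ) ∈ S := by
      intro k
      rw [hvC k]
      exact add_mem (pow_mem hζS _) (pow_mem hζS _)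
    -- inverse of 1 + ζ^a
    have hu : ∀ a : ℕ, 0 < a → a < m →
        (1 + ζ ^ a) * (∑ i ∈ range (n + 1), (ζ ^ a) ^ (2 * i)) = 1 := by
      intro a ha ham
      rw [aux_geom, show 2 * (n + 1) = m + 1 by omega, sum_range_succ,
        geom_sum_eq (hprim.pow_ne_one_of_pos_of_lt ha.ne' ham) m]
      have hm1 : (ζ ^ a) ^ m = 1 := by
        rw [← pow_mul, mul_comm, pow_mul, hζm, one_pow]
      rw [hm1]
      simp
    have huS : ∀ a : ℕ, (∑ i ∈ range (n + 1), (ζ ^ a) ^ (2 * i)) ∈ S := by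
      intro a
      exact sum_mem (fun i _ => pow_mem (pow_mem hζS a) _)
    -- each pair factor is invertible in S
    have hpair : ∀ j k : ℕ, k ≤ n → j < k →
        ∃ c ∈ S, (((v j : ℝ) : ℂ) + ((v k : ℝ) : ℂ)) * c = 1 := by
      intro j k hk hjk
      set a := k - j with hadef
      set cc := j + k with hccdef
      have hu1 := hu a (by omega) (by omega)
      have hu2 := hu cc (by omega) (by omega)
      set u1 := ∑ i ∈ range (n + 1), (ζ ^ a) ^ (2 * i) with hu1def
      set u2 := ∑ i ∈ range (n + 1), (ζ ^ cc) ^ (2 * i) with hu2def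
      have hfac : ζ ^ k * (((v j : ℝ) : ℂ) + ((v k : ℝ) : ℂ))
          = (1 + ζ ^ a) * (1 + ζ ^ cc) := by
        rw [hvC j, hvC k]
        have e1 : ζ ^ k * ζ ^ j = ζ ^ cc := by rw [← pow_add]; congr 1; omega
        have e2 : ζ ^ k * ζ ^ (j * (m - 1)) = ζ ^ a := by
          rw [← pow_add]
          have hjm : j * (m - 1) + j = j * m := by
            conv_rhs => rw [show m = (m - 1) + 1 by omega]
            rw [Nat.mul_succ]
          rw [show k + j * (m - 1) = a + j * m by omega, hpow a j]
        have e3 : ζ ^ k * ζ ^ (k * (m - 1)) = 1 := by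
          rw [← pow_add]
          have hkm : k * (m - 1) + k = k * m := by
            conv_rhs => rw [show m = (m - 1) + 1 by omega]
            rw [Nat.mul_succ]
          rw [show k + k * (m - 1) = 0 + k * m by omega, hpow 0 k, pow_zero]
        have e4 : ζ ^ a * ζ ^ cc = ζ ^ k * ζ ^ k := by
          rw [← pow_add, ← pow_add]; congr 1; omega
        linear_combination e1 + e2 + e3 - e4
      refine ⟨ζ ^ k * (u1 * u2), mul_mem (pow_mem hζS k) (mul_mem (huS a) (huS cc)), ?_⟩
      linear_combination (u1 * u2) * hfac + ((1 + ζ ^ cc) * u2) * hu1 + hu2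
    -- assemble
    set P := Finset.filter (fun p : ℕ × ℕ => p.1 < p.2)
        (Finset.Icc 1 n ×ˢ Finset.Icc 1 n) with hPdef
    have hBC : ((B : ℤ) : ℂ)
        = ∏ p ∈ P, (((v p.1 : ℝ) : ℂ) ^ 2 + ((v p.2 : ℝ) : ℂ) ^ 2) := by
      have h := congrArg (fun x : ℝ => (x : ℂ)) hB
      push_cast at h ⊢
      exact h
    obtain ⟨E, hES, hE⟩ := aux_sq S P (fun p => ((v p.1 : ℝ) : ℂ))
      (fun p => ((v p.2 : ℝ) : ℂ)) (fun p _ => hvS p.1) (fun p _ => hvS p.2)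
    obtain ⟨Ci, hCiS, hCi⟩ := aux_prod_inv S P
      (fun p => ((v p.1 : ℝ) : ℂ) + ((v p.2 : ℝ) : ℂ)) (by
        intro p hp
        simp only [hPdef, Finset.mem_filter, Finset.mem_product, Finset.mem_Icc] at hp
        exact hpair p.1 p.2 hp.1.2.2 hp.2)
    have hbC : ((B : ℤ) : ℂ) = 2 * ((b : ℤ) : ℂ) := by rw [hb]; push_cast; ring
    have h1 : (2 : ℂ) * ((((b : ℤ) : ℂ) - E) * Ci ^ 2) = 1 := by
      linear_combination Ci ^ 2 * hE + Ci ^ 2 * hBC - Ci ^ 2 * hbC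
        + ((∏ p ∈ P, (((v p.1 : ℝ) : ℂ) + ((v p.2 : ℝ) : ℂ))) * Ci + 1) * hCi
    have hrS : (((b : ℤ) : ℂ) - E) * Ci ^ 2 ∈ S := by
      refine mul_mem (sub_mem ?_ hES) (pow_mem hCiS 2)
      simpa using S.algebraMap_mem b
    have h2S : ((2 : ℂ)⁻¹) ∈ S := by
      rwa [inv_eq_of_mul_eq_one_right h1]
    have h2int : IsIntegral ℤ ((2 : ℚ)⁻¹) := by
      have hmap : algebraMap ℚ ℂ ((2 : ℚ)⁻¹) = (2 : ℂ)⁻¹ := by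
        rw [map_inv₀]; norm_num
      have : IsIntegral ℤ (algebraMap ℚ ℂ ((2 : ℚ)⁻¹)) := by rwa [hmap]
      exact (isIntegral_algebraMap_iff (algebraMap ℚ ℂ).injective).mp this
    obtain ⟨z, hz⟩ := IsIntegrallyClosed.isIntegral_iff.mp h2int
    have hz' : (z : ℚ) = (2 : ℚ)⁻¹ := by simpa using hz
    have : (2 : ℚ) * (z : ℚ) = 1 := by rw [hz']; norm_num
    have : (2 * z : ℤ) = 1 := by exact_mod_cast this
    omega
  · exact ho
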